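/- Let P and Q be distinct associative 3-planes, and for an associative 3-plane R let Θ(R) be the linear span in Matrix (Fin 7) (Fin 7) ℝ of { a ∧ b : a, b ∈ R } ∪ { Ψ_{ab} : a, b ∈ R }. Then Θ(P) ∩ Θ(Q) = { u ⌟ φ : u ∈ P ∩ Q }. In particular, if P ∩ Q = {0} then Θ(P) ∩ Θ(Q) = {0}, and if P ∩ Q is one-dimensional spanned by a vector v then Θ(P) ∩ Θ(Q) is the one-dimensional span of v ⌟ φ. -/

import Mathlib

open scoped BigOperators RealInnerProductSpace Matrix

noncomputable section

/-- Euclidean 7-space. -/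
abbrev E7 := EuclideanSpace ℝ (Fin 7)

/-- Kronecker delta. -/
def kd (i j : Fin 7) : ℝ := if i = j then 1 else 0

/-- The totally antisymmetric 3-array with value 1 at `(a,b,c)` (for distinct `a,b,c`). -/
def tripleForm (a b c i j k : Fin 7) : ℝ :=
  kd i a * (kd j b * kd k c - kd j c * kd k b)
  - kd i b * (kd j a * kd k c - kd j c * kd k a)
  + kd i c * (kd j a * kd k b - kd j b * kd k a)

/-- The G₂ 3-form `φ` on `ℝ⁷` (indices 0-based: φ₁₂₃ = φ(0,1,2) etc.). -/
def phi7 (i j k : Fin 7) : ℝ :=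
  tripleForm 0 1 2 i j k + tripleForm 0 3 4 i j k + tripleForm 1 3 5 i j k
  + tripleForm 2 3 6 i j k + tripleForm 1 4 6 i j k
  - tripleForm 2 4 5 i j k - tripleForm 0 5 6 i j k

/-- The totally antisymmetric 4-array with value 1 at `(a,b,c,d)` (for distinct `a,b,c,d`). -/
def quadForm (a b c d i j k l : Fin 7) : ℝ :=
  Matrix.det !![kd i a, kd i b, kd i c, kd i d;
                kd j a, kd j b, kd j c, kd j d;
                kd k a, kd k b, kd k c, kd k d;
                kd l a, kd l b, kd l c, kd l d]

/-- The 4-form `ψ = ⋆φ` on `ℝ⁷` (indices 0-based). -/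
def psi7 (i j k l : Fin 7) : ℝ :=
  quadForm 3 4 5 6 i j k l + quadForm 0 2 3 5 i j k l + quadForm 1 2 5 6 i j k l
  + quadForm 0 2 4 6 i j k l + quadForm 0 1 4 5 i j k l
  - quadForm 1 2 3 4 i j k l - quadForm 0 1 3 6 i j k l

/-- The cross product on `ℝ⁷`: `(u × v)_k = Σ_{p,q} u_p v_q φ(p,q,k)`. -/
def crossE (u v : E7) : E7 := WithLp.toLp 2 (fun k => ∑ p, ∑ q, u p * v q * phi7 p q k)

/-- The matrix `u ⌟ φ`, with entries `(u ⌟ φ)(i,j) = Σ_p u_p φ(p,i,j)`. -/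
def contractPhi (u : E7) : Matrix (Fin 7) (Fin 7) ℝ :=
  Matrix.of fun i j => ∑ p, u p * phi7 p i j

/-- The matrix `u ∧ v`, with entries `u_i v_j - u_j v_i`. -/
def wedgeM (u v : E7) : Matrix (Fin 7) (Fin 7) ℝ :=
  Matrix.of fun i j => u i * v j - u j * v i

/-- The matrix `Ψ_{uv}`, with entries `Σ_{p,q} u_p v_q ψ(p,q,i,j)`. -/
def PsiM (u v : E7) : Matrix (Fin 7) (Fin 7) ℝ :=
  Matrix.of fun i j => ∑ p, ∑ q, u p * v q * psi7 p q i j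

/-- Evaluation of a matrix as a bilinear form: `X(u,v) = Σ_{i,j} u_i v_j X(i,j)`. -/
def Xform (X : Matrix (Fin 7) (Fin 7) ℝ) (u v : E7) : ℝ := ∑ i, ∑ j, u i * v j * X i j

/-- `X.mulVec v` as a map `E7 → E7`. -/
def mulVecE (X : Matrix (Fin 7) (Fin 7) ℝ) (v : E7) : E7 := WithLp.toLp 2 (fun i => ∑ j, X i j * v j)

/-- A skew-symmetric matrix is of type `Λ²₁₄` (i.e. lies in 𝔤₂). -/
def IsType14 (X : Matrix (Fin 7) (Fin 7) ℝ) : Prop :=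
  ∀ i j k : Fin 7, ∑ p, (X i p * phi7 p j k + X j p * phi7 i p k + X k p * phi7 i j p) = 0

/-- A G₂-adapted frame: an orthonormal basis `e₁,…,e₇` with
`e₃ = e₁ × e₂`, `e₅ = e₁ × e₄`, `e₆ = e₂ × e₄`, `e₇ = e₃ × e₄` (0-based indices). -/
def IsG2Frame (e : Fin 7 → E7) : Prop :=
  Orthonormal ℝ e ∧ e 2 = crossE (e 0) (e 1) ∧ e 4 = crossE (e 0) (e 3)
  ∧ e 5 = crossE (e 1) (e 3) ∧ e 6 = crossE (e 2) (e 3)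

/-- An associative 3-plane: a 3-dimensional subspace closed under the cross product. -/
def IsAssociative (P : Submodule ℝ E7) : Prop :=
  Module.finrank ℝ P = 3 ∧ ∀ u ∈ P, ∀ v ∈ P, crossE u v ∈ P


/-- The subspace `Θ(R)` spanned by all `a ∧ b` and `Ψ_{ab}` for `a, b ∈ R`. -/
def Theta (R : Submodule ℝ E7) : Submodule ℝ (Matrix (Fin 7) (Fin 7) ℝ) :=
  Submodule.span ℝ
    {M : Matrix (Fin 7) (Fin 7) ℝ | ∃ a ∈ R, ∃ b ∈ R, M = wedgeM a b ∨ M = PsiM a b}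

/-! ### Auxiliary computational lemmas -/

@[simp] lemma fin7_mk0 (h : 0 < 7) : (⟨0, h⟩ : Fin 7) = (0 : Fin 7) := rfl
@[simp] lemma fin7_mk1 (h : 1 < 7) : (⟨1, h⟩ : Fin 7) = (1 : Fin 7) := rfl
@[simp] lemma fin7_mk2 (h : 2 < 7) : (⟨2, h⟩ : Fin 7) = (2 : Fin 7) := rfl
@[simp] lemma fin7_mk3 (h : 3 < 7) : (⟨3, h⟩ : Fin 7) = (3 : Fin 7) := rfl
@[simp] lemma fin7_mk4 (h : 4 < 7) : (⟨4, h⟩ : Fin 7) = (4 : Fin 7) := rfl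
@[simp] lemma fin7_mk5 (h : 5 < 7) : (⟨5, h⟩ : Fin 7) = (5 : Fin 7) := rfl
@[simp] lemma fin7_mk6 (h : 6 < 7) : (⟨6, h⟩ : Fin 7) = (6 : Fin 7) := rfl

lemma phi7_swap12 (p q k : Fin 7) : phi7 q p k = - phi7 p q k := by
  simp only [phi7, tripleForm]; ring

lemma phi7_swap23 (p q k : Fin 7) : phi7 p k q = - phi7 p q k := by
  simp only [phi7, tripleForm]; ring

lemma crossE_c0 (u v : E7) : crossE u v 0 = (u 1 * v 2 - u 2 * v 1) + (u 3 * v 4 - u 4 * v 3) - (u 5 * v 6 - u 6 * v 5) := by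
  simp [crossE, Fin.sum_univ_seven, phi7, tripleForm, kd]; ring

lemma crossE_c1 (u v : E7) : crossE u v 1 = (u 2 * v 0 - u 0 * v 2) + (u 3 * v 5 - u 5 * v 3) + (u 4 * v 6 - u 6 * v 4) := by
  simp [crossE, Fin.sum_univ_seven, phi7, tripleForm, kd]; ring

lemma crossE_c2 (u v : E7) : crossE u v 2 = (u 0 * v 1 - u 1 * v 0) + (u 3 * v 6 - u 6 * v 3) - (u 4 * v 5 - u 5 * v 4) := by
  simp [crossE, Fin.sum_univ_seven, phi7, tripleForm, kd]; ring

lemma crossE_c3 (u v : E7) : crossE u v 3 = (u 4 * v 0 - u 0 * v 4) + (u 5 * v 1 - u 1 * v 5) + (u 6 * v 2 - u 2 * v 6) := by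
  simp [crossE, Fin.sum_univ_seven, phi7, tripleForm, kd]; ring

lemma crossE_c4 (u v : E7) : crossE u v 4 = (u 0 * v 3 - u 3 * v 0) + (u 6 * v 1 - u 1 * v 6) - (u 5 * v 2 - u 2 * v 5) := by
  simp [crossE, Fin.sum_univ_seven, phi7, tripleForm, kd]; ring

lemma crossE_c5 (u v : E7) : crossE u v 5 = (u 1 * v 3 - u 3 * v 1) - (u 2 * v 4 - u 4 * v 2) - (u 6 * v 0 - u 0 * v 6) := by
  simp [crossE, Fin.sum_univ_seven, phi7, tripleForm, kd]; ring

lemma crossE_c6 (u v : E7) : crossE u v 6 = (u 2 * v 3 - u 3 * v 2) + (u 1 * v 4 - u 4 * v 1) - (u 0 * v 5 - u 5 * v 0) := by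
  simp [crossE, Fin.sum_univ_seven, phi7, tripleForm, kd]; ring

/-- The fundamental identity `u × (v × u) = |u|² v - ⟨u,v⟩ u`. -/
lemma crossE_cross (u v : E7) :
    crossE u (crossE v u) = (∑ i, u i * u i) • v - (∑ i, u i * v i) • u := by
  ext k
  fin_cases k <;>
  · simp only [PiLp.sub_apply, PiLp.smul_apply, smul_eq_mul, Fin.sum_univ_seven,
      fin7_mk0, fin7_mk1, fin7_mk2, fin7_mk3, fin7_mk4, fin7_mk5, fin7_mk6,
      crossE_c0, crossE_c1, crossE_c2, crossE_c3, crossE_c4, crossE_c5, crossE_c6]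
    ring

lemma det_fin_four' (M : Matrix (Fin 4) (Fin 4) ℝ) :
    M.det = M 0 0*M 1 1*M 2 2*M 3 3 - M 0 0*M 1 1*M 2 3*M 3 2 - M 0 0*M 1 2*M 2 1*M 3 3 + M 0 0*M 1 2*M 2 3*M 3 1 + M 0 0*M 1 3*M 2 1*M 3 2 - M 0 0*M 1 3*M 2 2*M 3 1 - M 0 1*M 1 0*M 2 2*M 3 3 + M 0 1*M 1 0*M 2 3*M 3 2 + M 0 1*M 1 2*M 2 0*M 3 3 - M 0 1*M 1 2*M 2 3*M 3 0 - M 0 1*M 1 3*M 2 0*M 3 2 + M 0 1*M 1 3*M 2 2*M 3 0 + M 0 2*M 1 0*M 2 1*M 3 3 - M 0 2*M 1 0*M 2 3*M 3 1 - M 0 2*M 1 1*M 2 0*M 3 3 + M 0 2*M 1 1*M 2 3*M 3 0 + M 0 2*M 1 3*M 2 0*M 3 1 - M 0 2*M 1 3*M 2 1*M 3 0 - M 0 3*M 1 0*M 2 1*M 3 2 + M 0 3*M 1 0*M 2 2*M 3 1 + M 0 3*M 1 1*M 2 0*M 3 2 - M 0 3*M 1 1*M 2 2*M 3 0 - M 0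 3*M 1 2*M 2 0*M 3 1 + M 0 3*M 1 2*M 2 1*M 3 0 := by
  rw [Matrix.det_succ_row_zero]
  simp [Fin.sum_univ_succ, Matrix.det_fin_three, show (Fin.succ 2 : Fin 4) = 3 from rfl,
    show Fin.succAbove (2:Fin 4) 2 = 3 from rfl, show Fin.succAbove (1:Fin 4) 2 = 3 from rfl,
    show Fin.succAbove (3:Fin 4) 2 = 2 from rfl, show Fin.castSucc (2:Fin 3) = (2:Fin 4) from rfl]
  ring

lemma quadForm_expand (a b c d i j k l : Fin 7) : quadForm a b c d i j k l =
    kd i a * (kd j b * (kd k c * kd l d - kd k d * kd l c)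
      - kd j c * (kd k b * kd l d - kd k d * kd l b)
      + kd j d * (kd k b * kd l c - kd k c * kd l b))
  - kd i b * (kd j a * (kd k c * kd l d - kd k d * kd l c)
      - kd j c * (kd k a * kd l d - kd k d * kd l a)
      + kd j d * (kd k a * kd l c - kd k c * kd l a))
  + kd i c * (kd j a * (kd k b * kd l d - kd k d * kd l b)
      - kd j b * (kd k a * kd l d - kd k d * kd l a)
      + kd j d * (kd k a * kd l b - kd k b * kd l a))
  - kd i d * (kd j a * (kd k b * kd l c - kd k c * kd l b)
      - kd j b * (kd k a * kd l c - kd k c * kd l a)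
      + kd j c * (kd k a * kd l b - kd k b * kd l a)) := by
  rw [quadForm, det_fin_four']
  simp
  ring

lemma quadForm_swap34 (a b c d i j k l : Fin 7) :
    quadForm a b c d i j l k = - quadForm a b c d i j k l := by
  rw [quadForm_expand, quadForm_expand]; ring

lemma psi7_swap34 (p q i j : Fin 7) : psi7 p q j i = - psi7 p q i j := by
  simp only [psi7]
  rw [quadForm_swap34 3 4 5 6 p q i j, quadForm_swap34 0 2 3 5 p q i j,
    quadForm_swap34 1 2 5 6 p q i j, quadForm_swap34 0 2 4 6 p q i j,
    quadForm_swap34 0 1 4 5 p q i j, quadForm_swap34 1 2 3 4 p q i j,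
    quadForm_swap34 0 1 3 6 p q i j]
  ring

lemma contractPhi_skew (u : E7) (i j : Fin 7) : contractPhi u j i = - contractPhi u i j := by
  simp only [contractPhi, Matrix.of_apply]
  rw [← Finset.sum_neg_distrib]
  exact Finset.sum_congr rfl fun p _ => by rw [phi7_swap23]; ring

lemma wedgeM_skew (u v : E7) (i j : Fin 7) : wedgeM u v j i = - wedgeM u v i j := by
  simp only [wedgeM, Matrix.of_apply]; ring

lemma PsiM_skew (u v : E7) (i j : Fin 7) : PsiM u v j i = - PsiM u v i j := by
  simp only [PsiM, Matrix.of_apply]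
  rw [← Finset.sum_neg_distrib]
  refine Finset.sum_congr rfl fun p _ => ?_
  rw [← Finset.sum_neg_distrib]
  refine Finset.sum_congr rfl fun q _ => ?_
  rw [psi7_swap34]; ring

lemma skew_cancel {A B : Matrix (Fin 7) (Fin 7) ℝ} (hA : ∀ i j, A j i = -A i j)
    (hB : ∀ i j, B j i = -B i j) (h : ∀ i j : Fin 7, i < j → A i j = B i j) : A = B := by
  ext i j
  rcases lt_trichotomy i j with hij | rfl | hij
  · exact h i j hij
  · have h1 := hA i i
    have h2 := hB i i
    linarith
  · rw [hA j i, hB j i, h j i hij]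

set_option maxHeartbeats 2000000 in
/-- The fundamental identity `(u × v) ⌟ φ = u ∧ v - Ψ_{uv}`. -/
lemma contract_cross (u v : E7) : contractPhi (crossE u v) = wedgeM u v - PsiM u v := by
  apply skew_cancel (contractPhi_skew _)
    (fun i j => by simp only [Matrix.sub_apply]; rw [wedgeM_skew u v i j, PsiM_skew u v i j]; ring)
  intro i j hij
  fin_cases i <;> fin_cases j <;> first
    | exact absurd hij (by decide)
    | · simp only [Matrix.sub_apply, contractPhi, wedgeM, PsiM, Matrix.of_apply, Fin.sum_univ_seven,
          fin7_mk0, fin7_mk1, fin7_mk2, fin7_mk3, fin7_mk4, fin7_mk5, fin7_mk6,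
          crossE_c0, crossE_c1, crossE_c2, crossE_c3, crossE_c4, crossE_c5, crossE_c6]
        simp [phi7, tripleForm, psi7, quadForm_expand, kd]
        ring

/-! ### Structural lemmas -/

lemma sum_sq_eq_zero {x : E7} (h : (∑ i, x i * x i) = 0) : x = 0 := by
  have h' : ∀ i ∈ Finset.univ, x i * x i = 0 :=
    (Finset.sum_eq_zero_iff_of_nonneg (fun i _ => mul_self_nonneg _)).1 h
  ext i
  exact mul_self_eq_zero.mp (h' i (Finset.mem_univ i))

lemma crossE_smul_right (c : ℝ) (u v : E7) : crossE u (c • v) = c • crossE u v := by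
  ext k
  simp only [PiLp.toLp_apply, crossE, PiLp.smul_apply, smul_eq_mul, Finset.mul_sum]
  exact Finset.sum_congr rfl fun p _ => Finset.sum_congr rfl fun q _ => by ring

lemma crossE_add_right (u v w : E7) : crossE u (v + w) = crossE u v + crossE u w := by
  ext k
  simp only [PiLp.toLp_apply, crossE, PiLp.add_apply, ← Finset.sum_add_distrib]
  exact Finset.sum_congr rfl fun p _ => Finset.sum_congr rfl fun q _ => by ring

lemma crossE_sub_right (u v w : E7) : crossE u (v - w) = crossE u v - crossE u w := by
  ext k
  simp only [PiLp.toLp_apply, crossE, PiLp.sub_apply, ← Finset.sum_sub_distrib]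
  exact Finset.sum_congr rfl fun p _ => Finset.sum_congr rfl fun q _ => by ring

lemma crossE_neg_right (u v : E7) : crossE u (-v) = - crossE u v := by
  ext k
  simp only [PiLp.toLp_apply, crossE, PiLp.neg_apply, ← Finset.sum_neg_distrib]
  exact Finset.sum_congr rfl fun p _ => Finset.sum_congr rfl fun q _ => by ring

lemma crossE_zero_right (u : E7) : crossE u 0 = 0 := by
  ext k
  simp [crossE]

lemma crossE_antisym (u v : E7) : crossE v u = - crossE u v := by
  ext k
  simp only [PiLp.toLp_apply, crossE, PiLp.neg_apply]
  rw [Finset.sum_comm, ← Finset.sum_neg_distrib]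
  refine Finset.sum_congr rfl fun p _ => ?_
  rw [← Finset.sum_neg_distrib]
  refine Finset.sum_congr rfl fun q _ => ?_
  rw [phi7_swap12]; ring

lemma crossE_self (u : E7) : crossE u u = 0 := by
  ext k
  have h : crossE u u k = -(crossE u u k) := congrArg (fun x : E7 => x k) (crossE_antisym u u)
  have : crossE u u k = 0 := by linarith
  exact this

lemma mulVecE_add (A B : Matrix (Fin 7) (Fin 7) ℝ) (x : E7) :
    mulVecE (A + B) x = mulVecE A x + mulVecE B x := by
  ext i
  simp only [PiLp.toLp_apply, mulVecE, Matrix.add_apply, PiLp.add_apply, ← Finset.sum_add_distrib]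
  exact Finset.sum_congr rfl fun j _ => by ring

lemma mulVecE_sub (A B : Matrix (Fin 7) (Fin 7) ℝ) (x : E7) :
    mulVecE (A - B) x = mulVecE A x - mulVecE B x := by
  ext i
  simp only [PiLp.toLp_apply, mulVecE, Matrix.sub_apply, PiLp.sub_apply, ← Finset.sum_sub_distrib]
  exact Finset.sum_congr rfl fun j _ => by ring

lemma mulVecE_smul (c : ℝ) (A : Matrix (Fin 7) (Fin 7) ℝ) (x : E7) :
    mulVecE (c • A) x = c • mulVecE A x := by
  ext i
  simp only [PiLp.toLp_apply, mulVecE, Matrix.smul_apply, PiLp.smul_apply, smul_eq_mul, Finset.mul_sum]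
  exact Finset.sum_congr rfl fun j _ => by ring

lemma mulVecE_zero (x : E7) : mulVecE (0 : Matrix (Fin 7) (Fin 7) ℝ) x = 0 := by
  ext i
  simp [mulVecE]

lemma mulVecE_wedge (a b x : E7) :
    mulVecE (wedgeM a b) x = (∑ j, b j * x j) • a - (∑ j, a j * x j) • b := by
  ext i
  simp only [PiLp.toLp_apply, mulVecE, wedgeM, Matrix.of_apply, PiLp.sub_apply, PiLp.smul_apply, smul_eq_mul,
    Finset.sum_mul, ← Finset.sum_sub_distrib]
  exact Finset.sum_congr rfl fun j _ => by ring

lemma mulVecE_contract (w x : E7) : mulVecE (contractPhi w) x = - crossE w x := by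
  ext i
  simp only [PiLp.toLp_apply, mulVecE, contractPhi, Matrix.of_apply, crossE, PiLp.neg_apply, Finset.sum_mul]
  rw [Finset.sum_comm, ← Finset.sum_neg_distrib]
  refine Finset.sum_congr rfl fun p _ => ?_
  rw [← Finset.sum_neg_distrib]
  refine Finset.sum_congr rfl fun j _ => ?_
  rw [phi7_swap23]; ring

lemma mulVecE_single (X : Matrix (Fin 7) (Fin 7) ℝ) (j i : Fin 7) :
    mulVecE X (EuclideanSpace.single j (1:ℝ)) i = X i j := by
  simp [mulVecE, EuclideanSpace.single_apply, mul_ite, mul_one, mul_zero]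

/-- `contractPhi` as a linear map. -/
def contractL : E7 →ₗ[ℝ] Matrix (Fin 7) (Fin 7) ℝ where
  toFun := contractPhi
  map_add' u v := by
    ext i j
    simp only [contractPhi, Matrix.of_apply, Matrix.add_apply, PiLp.add_apply,
      ← Finset.sum_add_distrib]
    exact Finset.sum_congr rfl fun p _ => by ring
  map_smul' c u := by
    ext i j
    simp only [contractPhi, Matrix.of_apply, Matrix.smul_apply, PiLp.smul_apply,
      smul_eq_mul, RingHom.id_apply, Finset.mul_sum]
    exact Finset.sum_congr rfl fun p _ => by ring

lemma contractL_apply (u : E7) : contractL u = contractPhi u := rfl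

/-- The span of the wedges of elements of `R`. -/
def WedgeSpan (R : Submodule ℝ E7) : Submodule ℝ (Matrix (Fin 7) (Fin 7) ℝ) :=
  Submodule.span ℝ {M | ∃ a ∈ R, ∃ b ∈ R, M = wedgeM a b}

lemma WedgeSpan_mulVec {R : Submodule ℝ E7} {X : Matrix (Fin 7) (Fin 7) ℝ}
    (hX : X ∈ WedgeSpan R) (x : E7) : mulVecE X x ∈ R := by
  induction hX using Submodule.span_induction with
  | mem M hM =>
    obtain ⟨a, ha, b, hb, rfl⟩ := hM
    rw [mulVecE_wedge]
    exact sub_mem (R.smul_mem _ ha) (R.smul_mem _ hb)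
  | zero => rw [mulVecE_zero]; exact R.zero_mem
  | add A B _ _ hA hB => rw [mulVecE_add]; exact R.add_mem hA hB
  | smul c A _ hA => rw [mulVecE_smul]; exact R.smul_mem c hA

lemma WedgeSpan_skew {R : Submodule ℝ E7} {X : Matrix (Fin 7) (Fin 7) ℝ}
    (hX : X ∈ WedgeSpan R) : ∀ i j, X j i = - X i j := by
  induction hX using Submodule.span_induction with
  | mem M hM =>
    obtain ⟨a, ha, b, hb, rfl⟩ := hM
    exact wedgeM_skew a b
  | zero => intro i j; simp
  | add A B _ _ hA hB => intro i j; simp only [Matrix.add_apply, hA i j, hB i j]; ring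
  | smul c A _ hA => intro i j; simp only [Matrix.smul_apply, hA i j, smul_eq_mul]; ring

lemma contract_crossE_mem {R : Submodule ℝ E7} {a b : E7} (ha : a ∈ R) (hb : b ∈ R) :
    contractPhi (crossE a b) ∈ Theta R := by
  rw [contract_cross]
  exact sub_mem (Submodule.subset_span ⟨a, ha, b, hb, Or.inl rfl⟩)
    (Submodule.subset_span ⟨a, ha, b, hb, Or.inr rfl⟩)

lemma contractPhi_comb (c d : ℝ) (x y : E7) :
    contractPhi (c • x - d • y) = c • contractPhi x - d • contractPhi y := by
  rw [← contractL_apply, map_sub, map_smul, map_smul, contractL_apply, contractL_apply]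

lemma contract_pair {P : Submodule ℝ E7} (hP : IsAssociative P) {a b : E7}
    (ha : a ∈ P) (hb : b ∈ P)
    (hind : ∀ s t : ℝ, s • a + t • b = 0 → s = 0 ∧ t = 0) :
    contractPhi a ∈ Theta P := by
  set n1 := ∑ i, a i * a i with hn1
  set n2 := ∑ i, b i * b i with hn2
  set t := ∑ i, a i * b i with ht
  have hb0 : b ≠ 0 := by
    intro h
    have := (hind 0 1 (by simp [h])).2
    norm_num at this
  have hw : crossE a b ∈ P := hP.2 a ha b hb
  have hw' : crossE b a ∈ P := hP.2 b hb a ha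
  have hA : contractPhi (crossE b (crossE a b)) ∈ Theta P := contract_crossE_mem hb hw
  have hB : contractPhi (crossE a (crossE b a)) ∈ Theta P := contract_crossE_mem ha hw'
  have hba : (∑ i, b i * a i) = t := Finset.sum_congr rfl fun i _ => mul_comm _ _
  have e1 : crossE b (crossE a b) = n2 • a - t • b := by
    rw [crossE_cross b a, hba]
  have e2 : crossE a (crossE b a) = n1 • b - t • a := crossE_cross a b
  rw [e1, contractPhi_comb] at hA
  rw [e2, contractPhi_comb] at hB
  have key : (n1 * n2 - t * t) • contractPhi a =
      n1 • (n2 • contractPhi a - t • contractPhi b)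
      + t • (n1 • contractPhi b - t • contractPhi a) := by
    ext i j
    simp only [Matrix.add_apply, Matrix.sub_apply, Matrix.smul_apply, smul_eq_mul]
    ring
  have hmem : (n1 * n2 - t * t) • contractPhi a ∈ Theta P := by
    rw [key]
    exact add_mem (Submodule.smul_mem _ _ hA) (Submodule.smul_mem _ _ hB)
  have hd : n1 * n2 - t * t ≠ 0 := by
    intro hd0
    have hsq : (∑ i, (n2 * a i - t * b i) * (n2 * a i - t * b i)) = n2 * (n1 * n2 - t * t) := by
      calc (∑ i, (n2 * a i - t * b i) * (n2 * a i - t * b i))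
          = ∑ i, (n2 * n2 * (a i * a i) - 2 * (n2 * t) * (a i * b i) + t * t * (b i * b i)) :=
            Finset.sum_congr rfl fun i _ => by ring
        _ = (∑ i, (n2 * n2 * (a i * a i) - 2 * (n2 * t) * (a i * b i)))
              + ∑ i, t * t * (b i * b i) := Finset.sum_add_distrib
        _ = ((∑ i, n2 * n2 * (a i * a i)) - ∑ i, 2 * (n2 * t) * (a i * b i))
              + ∑ i, t * t * (b i * b i) := by rw [Finset.sum_sub_distrib]
        _ = n2 * n2 * n1 - 2 * (n2 * t) * t + t * t * n2 := by
            rw [← Finset.mul_sum, ← Finset.mul_sum, ← Finset.mul_sum]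
        _ = n2 * (n1 * n2 - t * t) := by ring
    rw [hd0, mul_zero] at hsq
    have hvec : n2 • a + (-t) • b = 0 := by
      have hz := sum_sq_eq_zero (x := n2 • a - t • b) ?_
      · rw [← hz]; ext k; simp only [PiLp.add_apply, PiLp.sub_apply, PiLp.smul_apply,
          smul_eq_mul]; ring
      · rw [← hsq]
        exact Finset.sum_congr rfl fun i _ => by
          simp only [PiLp.sub_apply, PiLp.smul_apply, smul_eq_mul]
    have hn2z : n2 = 0 := (hind n2 (-t) hvec).1
    exact hb0 (sum_sq_eq_zero (hn2 ▸ hn2z))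
  have := Submodule.smul_mem (Theta P) (n1 * n2 - t * t)⁻¹ hmem
  rwa [smul_smul, inv_mul_cancel₀ hd, one_smul] at this

lemma pair_of_li {ι : Type*} [Fintype ι] [DecidableEq ι] {e : ι → E7}
    (h : LinearIndependent ℝ e) {i j : ι} (hij : i ≠ j) :
    ∀ s t : ℝ, s • e i + t • e j = 0 → s = 0 ∧ t = 0 := by
  have hf : Function.Injective (![i, j] : Fin 2 → ι) := by
    intro x y hxy
    fin_cases x <;> fin_cases y <;> simp_all
  have h2 : LinearIndependent ℝ (e ∘ ![i, j]) := h.comp _ hf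
  have h3 : LinearIndependent ℝ ![e i, e j] := by
    have : e ∘ ![i, j] = ![e i, e j] := by
      funext k; fin_cases k <;> simp
    rwa [this] at h2
  exact fun s t hst => LinearIndependent.pair_iff.mp h3 s t hst

lemma contract_mem_Theta {P : Submodule ℝ E7} (hP : IsAssociative P) {u : E7} (hu : u ∈ P) :
    contractPhi u ∈ Theta P := by
  have bb : Module.Basis (Fin 3) ℝ P := Module.finBasisOfFinrankEq ℝ P hP.1
  have hind3 : LinearIndependent ℝ (fun i => (bb i : E7)) := by
    have := bb.linearIndependent.map' P.subtype P.ker_subtype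
    exact this
  have heP : ∀ i, (bb i : E7) ∈ P := fun i => (bb i).2
  have hrep := bb.sum_repr ⟨u, hu⟩
  have hrep' : (∑ k, (bb.repr ⟨u, hu⟩ k) • (bb k : E7)) = u := by
    have h1 := congrArg (Subtype.val) hrep
    rw [AddSubmonoidClass.coe_finset_sum] at h1
    exact h1
  rw [← hrep']
  have hmap : contractPhi (∑ k, (bb.repr ⟨u, hu⟩ k) • (bb k : E7))
      = ∑ k, (bb.repr ⟨u, hu⟩ k) • contractPhi (bb k : E7) := by
    rw [← contractL_apply, map_sum]
    exact Finset.sum_congr rfl fun k _ => by rw [map_smul, contractL_apply]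
  rw [hmap]
  refine Submodule.sum_mem _ fun k _ => Submodule.smul_mem _ _ ?_
  have hjk : ∃ j : Fin 3, j ≠ k := by
    fin_cases k
    · exact ⟨1, by decide⟩
    · exact ⟨0, by decide⟩
    · exact ⟨0, by decide⟩
  obtain ⟨j, hjk⟩ := hjk
  exact contract_pair hP (heP k) (heP j) (pair_of_li hind3 (Ne.symm hjk))

lemma span_triple_eq {P : Submodule ℝ E7} (hP : IsAssociative P) {a b : E7}
    (ha : a ∈ P) (hb : b ∈ P)
    (hpair : ∀ s t : ℝ, s • a + t • b = 0 → s = 0 ∧ t = 0) :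
    P = Submodule.span ℝ (Set.range ![a, b, crossE a b]) := by
  set w := crossE a b with hwdef
  have hb0 : b ≠ 0 := by
    intro h
    have := (hpair 0 1 (by simp [h])).2
    norm_num at this
  have hn2 : (∑ i, b i * b i) ≠ 0 := fun h => hb0 (sum_sq_eq_zero h)
  have hn2pos : 0 < ∑ i, b i * b i :=
    lt_of_le_of_ne (Finset.sum_nonneg fun i _ => mul_self_nonneg _) (Ne.symm hn2)
  set n2 := ∑ i, b i * b i with hn2def
  set tba := ∑ i, b i * a i with htbadef
  have e1 : crossE b w = n2 • a - tba • b := crossE_cross b a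
  have hba : crossE b a = -w := by rw [hwdef, crossE_antisym]
  have htriple : LinearIndependent ℝ ![a, b, w] := by
    rw [Fintype.linearIndependent_iff]
    intro g hg
    rw [Fin.sum_univ_three] at hg
    simp only [Matrix.cons_val_zero, Matrix.cons_val_one, Matrix.head_cons,
      Matrix.cons_val_two, Matrix.tail_cons] at hg
    -- hg : g 0 • a + g 1 • b + g 2 • w = 0
    have t1 : g 0 • crossE b a + g 1 • crossE b b + g 2 • crossE b w = 0 := by
      rw [← crossE_smul_right, ← crossE_smul_right, ← crossE_smul_right,
        ← crossE_add_right, ← crossE_add_right, hg, crossE_zero_right]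
    rw [crossE_self, hba, e1] at t1
    -- t1 : g 0 • (-w) + g 1 • 0 + g 2 • (n2 • a - tba • b) = 0
    have t2 : g 0 • crossE b (-w) + g 1 • crossE b (0:E7)
        + g 2 • crossE b (n2 • a - tba • b) = 0 := by
      rw [← crossE_smul_right, ← crossE_smul_right, ← crossE_smul_right,
        ← crossE_add_right, ← crossE_add_right, t1, crossE_zero_right]
    rw [crossE_neg_right, crossE_zero_right, crossE_sub_right, crossE_smul_right,
      crossE_smul_right, e1, hba, crossE_self] at t2
    -- t2 : g 0 • (-(n2 • a - tba • b)) + g 1 • 0 + g 2 • (n2 • (-w) - tba • 0) = 0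
    have comb : (n2 * (g 2 * g 2 * n2 + g 0 * g 0)) • a
        + (-(tba * (g 2 * g 2 * n2 + g 0 * g 0))) • b = 0 := by
      ext k
      have h1 := congrArg (fun x : E7 => x k) t1
      have h2 := congrArg (fun x : E7 => x k) t2
      simp only [PiLp.add_apply, PiLp.sub_apply, PiLp.smul_apply, PiLp.neg_apply,
        PiLp.zero_apply, smul_eq_mul] at h1 h2 ⊢
      linear_combination (g 2 * n2) * h1 - g 0 * h2
    have hzero := hpair _ _ comb
    have hfac : g 2 * g 2 * n2 + g 0 * g 0 = 0 := by
      rcases mul_eq_zero.mp hzero.1 with h | h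
      · exact absurd h hn2
      · exact h
    have hg0 : g 0 = 0 := by
      have : g 0 * g 0 = 0 := by nlinarith [mul_self_nonneg (g 2)]
      exact mul_self_eq_zero.mp this
    have hg2 : g 2 = 0 := by
      have : g 2 * g 2 = 0 := by nlinarith [mul_self_nonneg (g 0)]
      exact mul_self_eq_zero.mp this
    have hg1 : g 1 = 0 := by
      have hb1 : (0:ℝ) • a + g 1 • b = 0 := by
        rw [zero_smul, zero_add]
        have := hg
        rw [hg0, hg2, zero_smul, zero_smul, zero_add, add_zero] at this
        exact this
      exact (hpair 0 (g 1) hb1).2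
    intro k
    fin_cases k
    · exact hg0
    · exact hg1
    · exact hg2
  have hle : Submodule.span ℝ (Set.range ![a, b, w]) ≤ P := by
    rw [Submodule.span_le]
    rintro x ⟨k, rfl⟩
    fin_cases k
    · simpa using ha
    · simpa using hb
    · simpa using hP.2 a ha b hb
  have hfr : Module.finrank ℝ (Submodule.span ℝ (Set.range ![a, b, w])) = 3 := by
    simpa using finrank_span_eq_card htriple
  exact (Submodule.eq_of_le_of_finrank_le hle (by rw [hP.1, hfr])).symm

lemma finrank_inf_le_one {P Q : Submodule ℝ E7} (hP : IsAssociative P) (hQ : IsAssociative Q)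
    (hPQ : P ≠ Q) : Module.finrank ℝ ↥(P ⊓ Q) ≤ 1 := by
  by_contra hcon
  push_neg at hcon
  set r := Module.finrank ℝ ↥(P ⊓ Q) with hr
  have bb : Module.Basis (Fin r) ℝ ↥(P ⊓ Q) := Module.finBasis ℝ ↥(P ⊓ Q)
  have hind : LinearIndependent ℝ (fun i => ((bb i : ↥(P ⊓ Q)) : E7)) := by
    have := bb.linearIndependent.map' (P ⊓ Q).subtype (P ⊓ Q).ker_subtype
    exact this
  have h2r : 2 ≤ r := hcon
  set i0 : Fin r := ⟨0, by omega⟩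
  set i1 : Fin r := ⟨1, by omega⟩
  have hi01 : i0 ≠ i1 := by
    intro h
    have := congrArg Fin.val h
    simp [i0, i1] at this
  set a : E7 := ((bb i0 : ↥(P ⊓ Q)) : E7) with hadef
  set b : E7 := ((bb i1 : ↥(P ⊓ Q)) : E7) with hbdef
  have haPQ : a ∈ P ⊓ Q := (bb i0).2
  have hbPQ : b ∈ P ⊓ Q := (bb i1).2
  have hpair : ∀ s t : ℝ, s • a + t • b = 0 → s = 0 ∧ t = 0 := pair_of_li hind hi01
  have h1 : P = Submodule.span ℝ (Set.range ![a, b, crossE a b]) :=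
    span_triple_eq hP haPQ.1 hbPQ.1 hpair
  have h2 : Q = Submodule.span ℝ (Set.range ![a, b, crossE a b]) :=
    span_triple_eq hQ haPQ.2 hbPQ.2 hpair
  exact hPQ (h1.trans h2.symm)

lemma top_of_cross {w : E7} (hw : w ≠ 0) {V : Submodule ℝ E7} (hwV : w ∈ V)
    (hc : ∀ x : E7, crossE w x ∈ V) : V = ⊤ := by
  rw [eq_top_iff]
  intro y _
  have hn : (∑ i, w i * w i) ≠ 0 := fun h => hw (sum_sq_eq_zero h)
  have h5 := crossE_cross w y
  have hdec : (∑ i, w i * w i) • y = crossE w (crossE y w) + (∑ i, w i * y i) • w := by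
    rw [h5]; abel
  have hy' : (∑ i, w i * w i) • y ∈ V := by
    rw [hdec]; exact add_mem (hc _) (V.smul_mem _ hwV)
  have := V.smul_mem (∑ i, w i * w i)⁻¹ hy'
  rwa [smul_smul, inv_mul_cancel₀ hn, one_smul] at this

lemma skew_eq_zero_of_le_one {X : Matrix (Fin 7) (Fin 7) ℝ} {R : Submodule ℝ E7}
    (hskew : ∀ i j, X j i = -X i j) (hcol : ∀ x : E7, mulVecE X x ∈ R)
    (hR : Module.finrank ℝ ↥R ≤ 1) : X = 0 := by
  obtain ⟨z, hz⟩ : ∃ z : E7, R ≤ Submodule.span ℝ {z} := by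
    by_cases hbot : R = ⊥
    · exact ⟨0, by rw [hbot]; exact bot_le⟩
    · obtain ⟨z, hzR, hz0⟩ := Submodule.exists_mem_ne_zero_of_ne_bot hbot
      refine ⟨z, ?_⟩
      have h1 : Submodule.span ℝ {z} ≤ R := by
        rw [Submodule.span_le, Set.singleton_subset_iff]; exact hzR
      have h2 : Module.finrank ℝ ↥R ≤ Module.finrank ℝ ↥(Submodule.span ℝ {z}) := by
        rw [finrank_span_singleton hz0]; exact hR
      exact le_of_eq (Submodule.eq_of_le_of_finrank_le h1 h2).symm
  have hcols : ∀ j, ∃ c : ℝ, ∀ i, X i j = c * z i := by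
    intro j
    have hmem := hz (hcol (EuclideanSpace.single j 1))
    rw [Submodule.mem_span_singleton] at hmem
    obtain ⟨c, hc⟩ := hmem
    refine ⟨c, fun i => ?_⟩
    rw [← mulVecE_single X j i, ← hc]
    simp [PiLp.smul_apply]
  choose c hc using hcols
  ext i j
  simp only [Matrix.zero_apply]
  by_contra hne
  have h1 : X i j = c j * z i := hc j i
  have h2 : X j i = c i * z j := hc i j
  have hdiagi : X i i = 0 := by have := hskew i i; linarith
  have hdiagj : X j j = 0 := by have := hskew j j; linarith
  have hci : c i * z i = 0 := by rw [← hc i i]; exact hdiagi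
  have hji : X j i ≠ 0 := by rw [hskew i j]; simpa using hne
  have hzi : z i ≠ 0 := fun h => hne (by rw [h1, h, mul_zero])
  have hcine : c i ≠ 0 := fun h => hji (by rw [h2, h, zero_mul])
  exact hzi (by rcases mul_eq_zero.mp hci with h | h; exact absurd h hcine; exact h)

lemma WedgeSpan_le_Theta (R : Submodule ℝ E7) : WedgeSpan R ≤ Theta R := by
  rw [WedgeSpan, Submodule.span_le]
  rintro M ⟨a, ha, b, hb, rfl⟩
  exact Submodule.subset_span ⟨a, ha, b, hb, Or.inl rfl⟩

lemma Theta_eq {P : Submodule ℝ E7} (hP : IsAssociative P) :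
    Theta P = WedgeSpan P ⊔ Submodule.map contractL P := by
  apply le_antisymm
  · rw [Theta, Submodule.span_le]
    rintro M ⟨a, ha, b, hb, (rfl | rfl)⟩
    · exact Submodule.mem_sup_left (Submodule.subset_span ⟨a, ha, b, hb, rfl⟩)
    · have hpsi : PsiM a b = wedgeM a b - contractPhi (crossE a b) := by
        rw [contract_cross]; abel
      rw [hpsi]
      exact sub_mem (Submodule.mem_sup_left (Submodule.subset_span ⟨a, ha, b, hb, rfl⟩))
        (Submodule.mem_sup_right ⟨crossE a b, hP.2 a ha b hb, rfl⟩)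
  · refine sup_le (WedgeSpan_le_Theta P) ?_
    rintro M ⟨u, hu, rfl⟩
    exact contract_mem_Theta hP hu

/-- Theorem 4.14 / Corollary 4.13: for distinct associative 3-planes `P, Q`,
`Θ(P) ∩ Θ(Q) = (P ∩ Q) ⌟ φ`. -/
theorem stmt19 (P Q : Submodule ℝ E7) (hP : IsAssociative P) (hQ : IsAssociative Q)
    (hPQ : P ≠ Q) :
    (∀ M : Matrix (Fin 7) (Fin 7) ℝ, M ∈ Theta P ⊓ Theta Q ↔ ∃ u ∈ P ⊓ Q, M = contractPhi u) ∧
    (P ⊓ Q = ⊥ → Theta P ⊓ Theta Q = ⊥) ∧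
    (∀ v : E7, v ≠ 0 → P ⊓ Q = Submodule.span ℝ {v} →
      Theta P ⊓ Theta Q = Submodule.span ℝ {contractPhi v}) := by
  have hinf1 := finrank_inf_le_one hP hQ hPQ
  have main : ∀ M : Matrix (Fin 7) (Fin 7) ℝ,
      M ∈ Theta P ⊓ Theta Q ↔ ∃ u ∈ P ⊓ Q, M = contractPhi u := by
    intro M
    constructor
    · rintro ⟨hMP, hMQ⟩
      rw [Theta_eq hP] at hMP
      rw [Theta_eq hQ] at hMQ
      obtain ⟨Wp, hWp, Zp, hZp, hMp⟩ := Submodule.mem_sup.mp hMP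
      obtain ⟨Wq, hWq, Zq, hZq, hMq⟩ := Submodule.mem_sup.mp hMQ
      obtain ⟨u, hu, rfl⟩ := hZp
      obtain ⟨v, hv, rfl⟩ := hZq
      have hsum : Wp + contractL u = Wq + contractL v := hMp.trans hMq.symm
      have hd : Wp - Wq = contractPhi (v - u) := by
        rw [← contractL_apply, map_sub]
        rw [sub_eq_sub_iff_add_eq_add, hsum]
        exact add_comm _ _
      have hdPQ : v - u ∈ P ⊔ Q :=
        sub_mem (Submodule.mem_sup_right hv) (Submodule.mem_sup_left hu)
      have hcross : ∀ x : E7, crossE (v - u) x ∈ P ⊔ Q := by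
        intro x
        have h1 : mulVecE (Wp - Wq) x ∈ P ⊔ Q := by
          rw [mulVecE_sub]
          exact sub_mem (Submodule.mem_sup_left (WedgeSpan_mulVec hWp x))
            (Submodule.mem_sup_right (WedgeSpan_mulVec hWq x))
        rw [hd, mulVecE_contract] at h1
        have := Submodule.neg_mem _ h1
        rwa [neg_neg] at this
      have hd0 : v - u = 0 := by
        by_contra hd0
        have htop := top_of_cross hd0 hdPQ hcross
        have h6 := Submodule.finrank_sup_add_finrank_inf_eq P Q
        rw [htop, finrank_top, hP.1, hQ.1] at h6
        have h7 : Module.finrank ℝ E7 = 7 := finrank_euclideanSpace_fin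
        omega
      have huv : v = u := by rwa [sub_eq_zero] at hd0
      have hWpq : Wp = Wq := by
        have : Wp - Wq = 0 := by
          rw [hd, hd0, ← contractL_apply, map_zero]
        rwa [sub_eq_zero] at this
      have hW0 : Wp = 0 := by
        refine skew_eq_zero_of_le_one (R := P ⊓ Q) (WedgeSpan_skew hWp) ?_ hinf1
        intro x
        refine ⟨WedgeSpan_mulVec hWp x, ?_⟩
        rw [hWpq]
        exact WedgeSpan_mulVec hWq x
      refine ⟨u, ⟨hu, huv ▸ hv⟩, ?_⟩
      rw [← hMp, hW0, zero_add, contractL_apply]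
    · rintro ⟨u, ⟨huP, huQ⟩, rfl⟩
      exact ⟨contract_mem_Theta hP huP, contract_mem_Theta hQ huQ⟩
  refine ⟨main, ?_, ?_⟩
  · intro hbot
    rw [eq_bot_iff]
    intro M hM
    obtain ⟨u, hu, rfl⟩ := (main M).mp hM
    rw [hbot, Submodule.mem_bot] at hu
    rw [hu, Submodule.mem_bot, ← contractL_apply, map_zero]
  · intro v hv0 hspan
    apply le_antisymm
    · intro M hM
      obtain ⟨u, hu, rfl⟩ := (main M).mp hM
      rw [hspan, Submodule.mem_span_singleton] at hu
      obtain ⟨c, rfl⟩ := hu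
      have : contractPhi (c • v) = c • contractPhi v := by
        rw [← contractL_apply, map_smul, contractL_apply]
      rw [this]
      exact Submodule.smul_mem _ _ (Submodule.mem_span_singleton_self _)
    · rw [Submodule.span_le, Set.singleton_subset_iff]
      have hv : v ∈ P ⊓ Q := by
        rw [hspan]; exact Submodule.mem_span_singleton_self v
      exact (main _).mpr ⟨v, hv, rfl⟩

end
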